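/- arXiv:2602.03206 — 2 statements merged into one kernel-verified Lean document; each statement's English description precedes it below -/
import Mathlib

section
/- Let L be a Dedekind complete unital f-algebra, X a partially ordered L-module, x ∈ X with x ≥ 0, and π an idempotent of L. Then the order interval [0, πx] equals π·[0, x], i.e., {y : 0 ≤ y ≤ πx} = {πz : 0 ≤ z ≤ x}. -/
/-- A Dedekind complete unital `f`-algebra over the reals. -/
class DFAlgebra (L : Type*) extends CommRing L, Lattice L, Algebra ℝ L where
  add_le_add_left : ∀ a b : L, a ≤ b → ∀ c : L, c + a ≤ c + b
  mul_nonneg : ∀ a b : L, 0 ≤ a → 0 ≤ b → 0 ≤ a * b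
  f_prop : ∀ a b c : L, a ⊓ b = 0 → 0 ≤ c → (c * a) ⊓ b = 0
  algebraMap_nonneg : ∀ r : ℝ, 0 ≤ r → 0 ≤ algebraMap r
  dedekind : ∀ S : Set L, S.Nonempty → BddAbove S → ∃ a : L, IsLUB S a

/-- A partially ordered `L`-module. -/
class POModule (L : Type*) [DFAlgebra L] (X : Type*) extends
    AddCommGroup X, Module L X, PartialOrder X where
  add_le_add_left : ∀ a b : X, a ≤ b → ∀ c : X, c + a ≤ c + b
  smul_le_smul : ∀ l : L, 0 ≤ l → ∀ a b : X, a ≤ b → l • a ≤ l • b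

section aux

variable {L : Type*} [DFAlgebra L]

instance DFAlgebra.toCovariant : CovariantClass L L (· + ·) (· ≤ ·) :=
  ⟨fun c a b h => DFAlgebra.add_le_add_left a b h c⟩

theorem DFAlgebra.sq_nonneg (a : L) : 0 ≤ a * a := by
  set p := a ⊔ 0 with hp
  set n := (-a) ⊔ 0 with hn
  have hp0 : 0 ≤ p := le_sup_right
  have hn0 : 0 ≤ n := le_sup_right
  have hinf : p ⊓ n = 0 := by
    have := posPart_inf_negPart_eq_zero a
    simpa [posPart_def, negPart_def, hp, hn, inf_comm] using this
  have hsub : p - n = a := by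
    have := posPart_sub_negPart a
    simpa [posPart_def, negPart_def, hp, hn] using this
  have h1 : (n * p) ⊓ n = 0 := DFAlgebra.f_prop p n n hinf hn0
  have h2 : (p * n) ⊓ (n * p) = 0 := by
    refine DFAlgebra.f_prop n (n * p) p ?_ hp0
    rwa [inf_comm] at h1
  have hpn : p * n = 0 := by
    rw [mul_comm n p] at h2
    simpa using h2
  have haa : a * a = p * p + n * n := by
    rw [← hsub]
    have : (p - n) * (p - n) = p * p + n * n - 2 * (p * n) := by ring
    rw [this, hpn]; ring
  rw [haa]
  exact add_nonneg (DFAlgebra.mul_nonneg p p hp0 hp0) (DFAlgebra.mul_nonneg n n hn0 hn0)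

instance POModule.toCovariant {X : Type*} [POModule L X] :
    CovariantClass X X (· + ·) (· ≤ ·) :=
  ⟨fun c a b h => POModule.add_le_add_left a b h c⟩

end aux

/-- For a PO L-module X, x ≥ 0 and an idempotent π, [0, π x] = π [0, x]. -/
theorem stmt2 (L X : Type*) [DFAlgebra L] [POModule L X]
    (x : X) (hx : 0 ≤ x) (π : L) (hπ : π * π = π) :
    Set.Icc (0 : X) (π • x) = (fun z => π • z) '' Set.Icc (0 : X) x := by
  have hπ0 : (0 : L) ≤ π := hπ ▸ DFAlgebra.sq_nonneg π
  have hπ1 : (0 : L) ≤ 1 - π := by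
    have : (1 - π) * (1 - π) = 1 - π := by
      have : (1 - π) * (1 - π) = 1 - 2 * π + π * π := by ring
      rw [this, hπ]; ring
    exact this ▸ DFAlgebra.sq_nonneg (1 - π)
  ext y
  simp only [Set.mem_Icc, Set.mem_image]
  constructor
  · rintro ⟨hy0, hy1⟩
    have hzero : (1 - π) • y = 0 := by
      have h1 : (0 : X) ≤ (1 - π) • y := by
        simpa using POModule.smul_le_smul (1 - π) hπ1 0 y hy0
      have h2 : (1 - π) • y ≤ 0 := by
        have := POModule.smul_le_smul (1 - π) hπ1 y (π • x) hy1
        rwa [smul_smul, sub_mul, one_mul, hπ, sub_self, zero_smul] at this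
      exact le_antisymm h2 h1
    have hy_eq : π • y = y := by
      have h := hzero
      rw [sub_smul, one_smul] at h
      exact (sub_eq_zero.mp h).symm
    have hyx : y ≤ x := by
      have hπx : π • x ≤ x := by
        have := POModule.smul_le_smul (1 - π) hπ1 0 x hx
        rw [smul_zero, sub_smul, one_smul] at this
        exact sub_nonneg.mp this
      exact le_trans hy1 hπx
    exact ⟨y, ⟨hy0, hyx⟩, hy_eq⟩
  · rintro ⟨z, ⟨hz0, hz1⟩, rfl⟩
    constructor
    · simpa using POModule.smul_le_smul π hπ0 0 z hz0
    · exact POModule.smul_le_smul π hπ0 z x hz1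
end

section
/- Let L be a Dedekind complete unital f-algebra and X a partially ordered L-module. Then X is Archimedean (i.e., L-Archimedean) if and only if X is both ℝ-Archimedean and P-Archimedean, where P denotes the set of idempotents of L. -/
/-- X is S-Archimedean: for every downward directed D ⊆ S with infimum 0 in L
and every x ≥ 0 in X, the set Dx has infimum 0 in X. -/
def SArchimedean (L X : Type*) [DFAlgebra L] [POModule L X] (S : Set L) : Prop :=
  ∀ D : Set L, D ⊆ S → DirectedOn (fun a b => b ≤ a) D → IsGLB D 0 →
    ∀ x : X, 0 ≤ x → IsGLB ((fun l => l • x) '' D) 0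

namespace Stmt5Aux

variable {L : Type*} [DFAlgebra L]

instance covL : CovariantClass L L (· + ·) (· ≤ ·) :=
  ⟨fun c a b h => DFAlgebra.add_le_add_left a b h c⟩

instance covL' : CovariantClass L L (Function.swap (· + ·)) (· ≤ ·) :=
  ⟨fun c a b h => by simpa [add_comm] using DFAlgebra.add_le_add_left a b h c⟩

lemma one_nonneg' : (0 : L) ≤ 1 := by
  have := DFAlgebra.algebraMap_nonneg (L := L) 1 zero_le_one
  rwa [map_one] at this

lemma mul_mono_left {c a b : L} (hc : 0 ≤ c) (h : a ≤ b) : c * a ≤ c * b := by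
  have h0 := DFAlgebra.mul_nonneg c (b - a) hc (sub_nonneg.2 h)
  rw [mul_sub] at h0
  exact sub_nonneg.1 h0

lemma algMono {r s : ℝ} (h : r ≤ s) : algebraMap ℝ L r ≤ algebraMap ℝ L s := by
  have := DFAlgebra.algebraMap_nonneg (L := L) (s - r) (by linarith)
  rw [map_sub] at this
  exact sub_nonneg.1 this

lemma disj_mul {a b : L} (h : a ⊓ b = 0) : a * b = 0 := by
  have ha : (0 : L) ≤ a := by rw [← h]; exact inf_le_left
  have hb : (0 : L) ≤ b := by rw [← h]; exact inf_le_right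
  have h1 : (b * a) ⊓ b = 0 := DFAlgebra.f_prop a b b h hb
  rw [inf_comm] at h1
  have h2 : (a * b) ⊓ (b * a) = 0 := DFAlgebra.f_prop b (b * a) a h1 ha
  rw [mul_comm b a, inf_idem] at h2
  rw [mul_comm a b] at h2 ⊢
  exact h2

lemma nsmul_mono {a b : L} (h : a ≤ b) (n : ℕ) : n • a ≤ n • b := by
  induction n with
  | zero => simp
  | succ m ih => rw [succ_nsmul, succ_nsmul]; exact add_le_add ih h

lemma nsmul_nonneg' {a : L} (ha : 0 ≤ a) (n : ℕ) : 0 ≤ n • a := by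
  simpa using nsmul_mono ha n

lemma inf_add_le {a b c : L} (ha : 0 ≤ a) (hb : 0 ≤ b) (hc : 0 ≤ c) :
    a ⊓ (b + c) ≤ a ⊓ b + a ⊓ c := by
  have key : a ⊓ (b + c) - a ⊓ b ≤ a ⊓ c := by
    rw [sub_inf]
    apply sup_le
    · exact le_trans (sub_nonpos.2 inf_le_left) (le_inf ha hc)
    · refine le_inf ?_ ?_
      · exact le_trans (by simpa using sub_le_sub_left hb (a ⊓ (b + c))) inf_le_left
      · exact sub_le_iff_le_add'.2 inf_le_right
  exact sub_le_iff_le_add'.1 key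

lemma disj_nsmul {a b : L} (ha : 0 ≤ a) (hb : 0 ≤ b) (h : a ⊓ b = 0) :
    ∀ n : ℕ, a ⊓ (n • b) = 0 := by
  intro n
  induction n with
  | zero => rw [zero_nsmul]; exact inf_eq_right.2 ha
  | succ m ih =>
    refine le_antisymm ?_ (le_inf ha (nsmul_nonneg' hb _))
    calc a ⊓ ((m + 1) • b) = a ⊓ (m • b + b) := by rw [succ_nsmul]
      _ ≤ a ⊓ (m • b) + a ⊓ b := inf_add_le ha (nsmul_nonneg' hb m) hb
      _ = 0 := by rw [ih, h, add_zero]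

lemma posneg (w : L) : (w ⊔ 0) ⊓ ((-w) ⊔ 0) = 0 := by
  set e := w ⊔ 0 with hed
  set f := (-w) ⊔ 0 with hfd
  have h1 : e - w = f := by
    rw [hed, hfd, sup_sub, sub_self, zero_sub, sup_comm]
  have h1' : e - f = w := by rw [← h1]; abel
  refine le_antisymm ?_ (le_inf le_sup_right le_sup_right)
  have hw0 : w ⊓ 0 = -f := by rw [hfd, neg_sup, neg_neg, neg_zero]
  have h2 : e ⊓ f - f ≤ -f := by
    rw [← hw0]
    refine le_inf ?_ ?_
    · calc e ⊓ f - f ≤ e - f := sub_le_sub_right inf_le_left f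
        _ = w := h1'
    · exact sub_nonpos.2 inf_le_right
  have h3 := sub_le_iff_le_add.1 h2
  simpa using h3

lemma arch {a b : L} (h : ∀ n : ℕ, n • a ≤ b) : a ≤ 0 := by
  obtain ⟨u, hu⟩ := DFAlgebra.dedekind (Set.range fun n : ℕ => n • a)
    ⟨0 • a, ⟨0, rfl⟩⟩ ⟨b, by rintro _ ⟨n, rfl⟩; exact h n⟩
  have h2 : u ≤ u - a := by
    apply hu.2
    rintro _ ⟨n, rfl⟩
    rw [le_sub_iff_add_le, ← succ_nsmul]
    exact hu.1 ⟨n + 1, rfl⟩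
  have h3 := le_sub_iff_add_le.1 h2
  exact (add_le_iff_nonpos_right u).1 h3

lemma arch' {a : L} (h : ∀ n : ℕ, a ≤ algebraMap ℝ L (1 / ((n : ℝ) + 1))) : a ≤ 0 := by
  have key : ∀ n : ℕ, n • (a ⊔ 0) ≤ 1 := by
    intro n
    cases n with
    | zero => simpa using one_nonneg' (L := L)
    | succ m =>
      have h1 : a ⊔ 0 ≤ algebraMap ℝ L (1 / ((m : ℝ) + 1)) :=
        sup_le (h m) (DFAlgebra.algebraMap_nonneg _ (by positivity))
      have h2 := mul_mono_left (DFAlgebra.algebraMap_nonneg (L := L) ((m : ℝ) + 1) (by positivity)) h1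
      rw [← map_mul] at h2
      have h3 : ((m : ℝ) + 1) * (1 / ((m : ℝ) + 1)) = 1 := by field_simp
      rw [h3, map_one] at h2
      have h4 : algebraMap ℝ L ((m : ℝ) + 1) * (a ⊔ 0) = (m + 1) • (a ⊔ 0) := by
        rw [← Algebra.smul_def]
        have h5 : ((m : ℝ) + 1) = ((m + 1 : ℕ) : ℝ) := by push_cast; ring
        rw [h5, Nat.cast_smul_eq_nsmul]
      rwa [h4] at h2
  exact le_trans le_sup_left (arch key)

lemma isLUB_inf {S : Set L} {u : L} (c : L) (h : IsLUB S u) :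
    IsLUB ((fun s => c ⊓ s) '' S) (c ⊓ u) := by
  constructor
  · rintro _ ⟨s, hs, rfl⟩
    exact inf_le_inf_left c (h.1 hs)
  · intro v hv
    have h1 : u ≤ c ⊔ u + v - c := by
      apply h.2
      intro s hs
      have e1 : s = c ⊔ s + c ⊓ s - c := by
        rw [add_comm (c ⊔ s) (c ⊓ s), inf_add_sup]; abel
      calc s = c ⊔ s + c ⊓ s - c := e1
        _ ≤ c ⊔ u + v - c := by
            apply sub_le_sub_right
            exact add_le_add (sup_le_sup_left (h.1 hs) c) (hv ⟨s, hs, rfl⟩)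
    have h2 : c ⊓ u = c + u - c ⊔ u := by rw [← inf_add_sup c u]; abel
    rw [h2, sub_le_iff_le_add]
    have h3 : u + c ≤ c ⊔ u + v := le_sub_iff_add_le.1 h1
    calc c + u = u + c := by abel
      _ ≤ c ⊔ u + v := h3
      _ = v + c ⊔ u := by abel

lemma mul_sup_pos {r : ℝ} (hr : 0 < r) (a b : L) :
    algebraMap ℝ L r * (a ⊔ b) = (algebraMap ℝ L r * a) ⊔ (algebraMap ℝ L r * b) := by
  have hr0 : 0 ≤ algebraMap ℝ L r := DFAlgebra.algebraMap_nonneg r hr.le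
  have hi0 : (0 : L) ≤ algebraMap ℝ L r⁻¹ := DFAlgebra.algebraMap_nonneg _ (by positivity)
  apply le_antisymm
  · have h1 : a ⊔ b ≤ algebraMap ℝ L r⁻¹ * ((algebraMap ℝ L r * a) ⊔ (algebraMap ℝ L r * b)) := by
      apply sup_le
      · have := mul_mono_left hi0 (le_sup_left :
          algebraMap ℝ L r * a ≤ (algebraMap ℝ L r * a) ⊔ (algebraMap ℝ L r * b))
        rwa [← mul_assoc, ← map_mul, inv_mul_cancel₀ hr.ne', map_one, one_mul] at this
      · have := mul_mono_left hi0 (le_sup_right :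
          algebraMap ℝ L r * b ≤ (algebraMap ℝ L r * a) ⊔ (algebraMap ℝ L r * b))
        rwa [← mul_assoc, ← map_mul, inv_mul_cancel₀ hr.ne', map_one, one_mul] at this
    have h2 := mul_mono_left hr0 h1
    rwa [← mul_assoc, ← map_mul, mul_inv_cancel₀ hr.ne', map_one, one_mul] at h2
  · exact sup_le (mul_mono_left hr0 le_sup_left) (mul_mono_left hr0 le_sup_right)

/-- The defining set for the band projection. -/
def projSet (v : L) : Set L := Set.range fun n : ℕ => (n • (v ⊔ 0)) ⊓ 1

lemma projSet_ne (v : L) : (projSet v).Nonempty := ⟨_, ⟨0, rfl⟩⟩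

lemma projSet_bdd (v : L) : BddAbove (projSet v) :=
  ⟨1, by rintro _ ⟨n, rfl⟩; exact inf_le_right⟩

/-- The band projection onto the band generated by `v ⊔ 0`. -/
noncomputable def proj (v : L) : L :=
  (DFAlgebra.dedekind _ (projSet_ne v) (projSet_bdd v)).choose

lemma proj_lub (v : L) : IsLUB (projSet v) (proj v) :=
  (DFAlgebra.dedekind _ (projSet_ne v) (projSet_bdd v)).choose_spec

lemma proj_nonneg (v : L) : 0 ≤ proj v := by
  have h := (proj_lub v).1 (⟨0, rfl⟩ : (0 • (v ⊔ 0)) ⊓ 1 ∈ projSet v)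
  rw [zero_nsmul, inf_eq_left.2 one_nonneg'] at h
  exact h

lemma proj_le_one (v : L) : proj v ≤ 1 :=
  (proj_lub v).2 (by rintro _ ⟨n, rfl⟩; exact inf_le_right)

lemma proj_mono {v w : L} (h : v ≤ w) : proj v ≤ proj w := by
  apply (proj_lub v).2
  rintro _ ⟨n, rfl⟩
  exact le_trans (inf_le_inf_right 1 (nsmul_mono (sup_le_sup_right h 0) n))
    ((proj_lub w).1 ⟨n, rfl⟩)

lemma proj_aux (v : L) (n : ℕ) :
    (v ⊔ 0) * (1 - proj v) ≤ algebraMap ℝ L (1 / ((n : ℝ) + 1)) ∧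
      (1 - proj v) ⊓ (v ⊔ 0) ≤ algebraMap ℝ L (1 / ((n : ℝ) + 1)) := by
  set e := v ⊔ 0 with hed
  have he0 : (0 : L) ≤ e := le_sup_right
  set cm := algebraMap ℝ L (1 / ((n : ℝ) + 1)) with hcm
  have hcm0 : (0 : L) ≤ cm := DFAlgebra.algebraMap_nonneg _ (by positivity)
  set g := (1 - (n + 1) • e) ⊔ 0 with hgd
  set hh := (e - cm) ⊔ 0 with hhd
  have hg0 : (0 : L) ≤ g := le_sup_right
  have hh0 : (0 : L) ≤ hh := le_sup_right
  have hπ1 : 1 - proj v ≤ g := by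
    have h1 : ((n + 1) • e) ⊓ 1 ≤ proj v := (proj_lub v).1 ⟨n + 1, rfl⟩
    have h2 : 1 - proj v ≤ 1 - ((n + 1) • e) ⊓ 1 := sub_le_sub_left h1 1
    rwa [sub_inf, sub_self] at h2
  have hgm : g = algebraMap ℝ L ((n : ℝ) + 1) * ((cm - e) ⊔ 0) := by
    rw [mul_sup_pos (by positivity), mul_zero, mul_sub, hcm, ← map_mul]
    have h3 : ((n : ℝ) + 1) * (1 / ((n : ℝ) + 1)) = 1 := by field_simp
    have h4 : algebraMap ℝ L ((n : ℝ) + 1) * e = (n + 1) • e := by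
      rw [← Algebra.smul_def]
      have h5 : ((n : ℝ) + 1) = ((n + 1 : ℕ) : ℝ) := by push_cast; ring
      rw [h5, Nat.cast_smul_eq_nsmul]
    rw [h3, map_one, h4]
  have hdisj : g ⊓ hh = 0 := by
    have h1 : ((cm - e) ⊔ 0) ⊓ hh = 0 := by
      have := posneg (cm - e)
      rw [neg_sub] at this
      rw [hhd]
      exact this
    rw [hgm]
    exact DFAlgebra.f_prop _ _ _ h1 (DFAlgebra.algebraMap_nonneg _ (by positivity))
  clear_value e cm g hh
  have hsplit : e = e ⊓ cm + hh := by
    have h1 : hh = e ⊔ cm - cm := by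
      rw [hhd, sup_sub, sub_self]
    rw [h1]
    have h2 : e ⊓ cm + e ⊔ cm = e + cm := inf_add_sup e cm
    calc e = (e ⊓ cm + e ⊔ cm) - cm := by rw [h2]; abel
      _ = e ⊓ cm + (e ⊔ cm - cm) := by abel
  have hg1 : g ≤ 1 := by
    rw [hgd]
    exact sup_le (sub_le_self 1 (nsmul_nonneg' he0 (n + 1))) one_nonneg'
  constructor
  · have h1 : e * (1 - proj v) ≤ e * g := mul_mono_left he0 hπ1
    have h2 : e * g = (e ⊓ cm) * g + hh * g := by rw [← add_mul, ← hsplit]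
    have h3 : hh * g = 0 := by rw [mul_comm]; exact disj_mul hdisj
    have h4 : (e ⊓ cm) * g ≤ cm * g := by
      have := mul_mono_left hg0 (inf_le_right : e ⊓ cm ≤ cm)
      calc (e ⊓ cm) * g = g * (e ⊓ cm) := mul_comm _ _
        _ ≤ g * cm := this
        _ = cm * g := mul_comm _ _
    have h5 : cm * g ≤ cm := by
      have := mul_mono_left hcm0 hg1
      rwa [mul_one] at this
    calc e * (1 - proj v) ≤ e * g := h1
      _ = (e ⊓ cm) * g + hh * g := h2
      _ = (e ⊓ cm) * g := by rw [h3, add_zero]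
      _ ≤ cm * g := h4
      _ ≤ cm := h5
  · have ht1 : (1 - proj v) ⊓ e ≤ g ⊓ e := inf_le_inf_right e hπ1
    have ht2 : g ⊓ e ≤ g ⊓ (e ⊓ cm) + g ⊓ hh := by
      calc g ⊓ e = g ⊓ (e ⊓ cm + hh) := by rw [← hsplit]
        _ ≤ g ⊓ (e ⊓ cm) + g ⊓ hh := inf_add_le hg0 (le_inf he0 hcm0) hh0
    calc (1 - proj v) ⊓ e ≤ g ⊓ e := ht1
      _ ≤ g ⊓ (e ⊓ cm) + g ⊓ hh := ht2
      _ = g ⊓ (e ⊓ cm) := by rw [hdisj, add_zero]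
      _ ≤ e ⊓ cm := inf_le_right
      _ ≤ cm := inf_le_right

lemma proj_mul_neg (v : L) : v * (1 - proj v) ≤ 0 := by
  have h1 : (v ⊔ 0) * (1 - proj v) ≤ 0 := arch' fun n => (proj_aux v n).1
  have h2 : v * (1 - proj v) ≤ (v ⊔ 0) * (1 - proj v) := by
    have h0 := DFAlgebra.mul_nonneg (v ⊔ 0 - v) (1 - proj v)
      (sub_nonneg.2 le_sup_left) (sub_nonneg.2 (proj_le_one v))
    rw [sub_mul] at h0
    exact sub_nonneg.1 h0
  exact h2.trans h1

lemma proj_idem (v : L) : proj v * proj v = proj v := by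
  set e := v ⊔ 0 with hed
  have he0 : (0 : L) ≤ e := le_sup_right
  have hπ0 : (0 : L) ≤ 1 - proj v := sub_nonneg.2 (proj_le_one v)
  have h1 : (1 - proj v) ⊓ e = 0 :=
    le_antisymm (arch' fun n => (proj_aux v n).2) (le_inf hπ0 he0)
  have h2 : ∀ s ∈ projSet v, (1 - proj v) ⊓ s = 0 := by
    rintro _ ⟨m, rfl⟩
    have hm : (1 - proj v) ⊓ (m • e) = 0 := disj_nsmul hπ0 he0 h1 m
    refine le_antisymm ?_
      (le_inf hπ0 (le_inf (nsmul_nonneg' he0 m) one_nonneg'))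
    calc (1 - proj v) ⊓ (m • e ⊓ 1) ≤ (1 - proj v) ⊓ (m • e) :=
          inf_le_inf_left _ inf_le_left
      _ = 0 := hm
  have h3 : (1 - proj v) ⊓ proj v = 0 := by
    have hL := isLUB_inf (1 - proj v) (proj_lub v)
    refine le_antisymm (hL.2 ?_) (le_inf hπ0 (proj_nonneg v))
    rintro _ ⟨s, hs, rfl⟩
    exact le_of_eq (h2 s hs)
  have h4 : (1 - proj v) * proj v = 0 := disj_mul h3
  have h5 : proj v * proj v = proj v - (1 - proj v) * proj v := by ring
  rw [h5, h4, sub_zero]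

lemma proj_eps {ε : ℝ} (hε : 0 < ε) {v : L} (hf : (-v) ⊔ 0 ≤ algebraMap ℝ L ε) :
    algebraMap ℝ L ε * proj v ≤ algebraMap ℝ L ε + v ⊓ 0 := by
  set f := (-v) ⊔ 0 with hfd
  have hf0 : (0 : L) ≤ f := le_sup_right
  have hπf : proj v ⊓ f = 0 := by
    have h2 : ∀ s ∈ projSet v, f ⊓ s = 0 := by
      rintro _ ⟨m, rfl⟩
      have h0 : f ⊓ (v ⊔ 0) = 0 := by rw [inf_comm]; exact posneg v
      have hm : f ⊓ (m • (v ⊔ 0)) = 0 := disj_nsmul hf0 le_sup_right h0 m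
      refine le_antisymm ?_
        (le_inf hf0 (le_inf (nsmul_nonneg' le_sup_right m) one_nonneg'))
      calc f ⊓ (m • (v ⊔ 0) ⊓ 1) ≤ f ⊓ (m • (v ⊔ 0)) := inf_le_inf_left _ inf_le_left
        _ = 0 := hm
    have hL := isLUB_inf f (proj_lub v)
    have h3 : f ⊓ proj v = 0 := by
      refine le_antisymm (hL.2 ?_) (le_inf hf0 (proj_nonneg v))
      rintro _ ⟨s, hs, rfl⟩
      exact le_of_eq (h2 s hs)
    rw [inf_comm]
    exact h3
  set g := algebraMap ℝ L ε⁻¹ * f with hgd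
  have hg0 : (0 : L) ≤ g :=
    DFAlgebra.mul_nonneg _ _ (DFAlgebra.algebraMap_nonneg _ (by positivity)) hf0
  have hg1 : g ≤ 1 := by
    have := mul_mono_left (DFAlgebra.algebraMap_nonneg (L := L) ε⁻¹ (by positivity)) hf
    rwa [← map_mul, inv_mul_cancel₀ hε.ne', map_one] at this
  have hgπ : g ⊓ proj v = 0 := by
    rw [hgd]
    exact DFAlgebra.f_prop f (proj v) _ (by rw [inf_comm]; exact hπf)
      (DFAlgebra.algebraMap_nonneg _ (by positivity))
  have hsum : proj v + g = proj v ⊔ g := by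
    have h0 : proj v ⊓ g = 0 := by rw [inf_comm]; exact hgπ
    rw [← inf_add_sup, h0, zero_add]
  have hle : proj v ≤ 1 - g := by
    have h0 : proj v + g ≤ 1 := by rw [hsum]; exact sup_le (proj_le_one v) hg1
    exact le_sub_iff_add_le.2 h0
  have h6 := mul_mono_left (DFAlgebra.algebraMap_nonneg (L := L) ε hε.le) hle
  calc algebraMap ℝ L ε * proj v ≤ algebraMap ℝ L ε * (1 - g) := h6
    _ = algebraMap ℝ L ε - f := by
        rw [mul_sub, mul_one, hgd, ← mul_assoc, ← map_mul, mul_inv_cancel₀ hε.ne',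
          map_one, one_mul]
    _ = algebraMap ℝ L ε + v ⊓ 0 := by
        rw [sub_eq_add_neg]
        congr 1
        rw [hfd, neg_sup, neg_neg, neg_zero]

lemma smul_nonneg'' {X : Type*} [POModule L X] {l : L} (hl : 0 ≤ l) {x : X} (hx : 0 ≤ x) :
    0 ≤ l • x := by
  have := POModule.smul_le_smul l hl 0 x hx
  rwa [smul_zero] at this

lemma smul_mono_scalar {X : Type*} [POModule L X] {l m : L} (h : l ≤ m) {x : X} (hx : 0 ≤ x) :
    l • x ≤ m • x := by
  haveI : CovariantClass X X (· + ·) (· ≤ ·) :=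
    ⟨fun c a b hab => POModule.add_le_add_left (L := L) a b hab c⟩
  haveI : CovariantClass X X (Function.swap (· + ·)) (· ≤ ·) :=
    ⟨fun c a b hab => by simpa [add_comm] using POModule.add_le_add_left (L := L) a b hab c⟩
  have h0 := POModule.smul_le_smul (m - l) (sub_nonneg.2 h) 0 x hx
  rw [smul_zero, sub_smul] at h0
  exact sub_nonneg.1 h0

end Stmt5Aux

open Stmt5Aux in
/-- X is Archimedean iff X is ℝ-Archimedean and P-Archimedean. -/
theorem stmt5 (L X : Type*) [DFAlgebra L] [POModule L X] :
    SArchimedean L X Set.univ ↔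
      SArchimedean L X {l : L | ∃ r : ℝ, l = algebraMap ℝ L r} ∧
        SArchimedean L X {π : L | π * π = π} := by
  constructor
  · intro h
    exact ⟨fun D _ => h D (Set.subset_univ D), fun D _ => h D (Set.subset_univ D)⟩
  · rintro ⟨hR, hP⟩ D - hdir hglb x hx
    haveI : CovariantClass X X (· + ·) (· ≤ ·) :=
      ⟨fun c a b hab => POModule.add_le_add_left (L := L) a b hab c⟩
    haveI : CovariantClass X X (Function.swap (· + ·)) (· ≤ ·) :=
      ⟨fun c a b hab => by simpa [add_comm] using POModule.add_le_add_left (L := L) a b hab c⟩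
    rcases Set.eq_empty_or_nonempty D with rfl | ⟨d0, hd0⟩
    · have hall : ∀ a : L, a ≤ 0 :=
        fun a => hglb.2 (fun b hb => absurd hb (Set.notMem_empty b))
      have h10 : (1 : L) = 0 := by
        refine le_antisymm (hall 1) ?_
        have h := hall (-1)
        exact neg_nonpos.1 h
      have hzero : ∀ y : X, y = 0 := by
        intro y
        calc y = (1 : L) • y := (one_smul L y).symm
          _ = (0 : L) • y := by rw [h10]
          _ = 0 := zero_smul L y
      constructor
      · rintro _ ⟨l, hl, rfl⟩
        exact absurd hl (Set.notMem_empty l)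
      · intro y hy
        rw [hzero y]
    · have hDpos : ∀ d ∈ D, (0 : L) ≤ d := fun d hd => hglb.1 hd
      constructor
      · rintro _ ⟨d, hd, rfl⟩
        exact smul_nonneg'' (hDpos d hd) hx
      · intro y hy
        have key : ∀ ε : ℝ, 0 < ε → y ≤ (algebraMap ℝ L ε) • x := by
          intro ε hε
          set εa := algebraMap ℝ L ε with hεad
          have hεa0 : (0 : L) ≤ εa := DFAlgebra.algebraMap_nonneg ε hε.le
          set D' : Set L := {d | d ∈ D ∧ d ≤ d0} with hD'd
          have hd0D' : d0 ∈ D' := ⟨hd0, le_rfl⟩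
          have hD'dir : DirectedOn (fun a b => b ≤ a) D' := by
            rintro a ⟨haD, had⟩ b ⟨hbD, hbd⟩
            obtain ⟨c, hcD, hca, hcb⟩ := hdir a haD b hbD
            exact ⟨c, ⟨hcD, hca.trans had⟩, hca, hcb⟩
          have hD'glb : IsGLB D' 0 := by
            constructor
            · exact fun d hd => hDpos d hd.1
            · intro l hl
              apply hglb.2
              intro d hd
              obtain ⟨c, hcD, hcd0, hcd⟩ := hdir d0 hd0 d hd
              exact (hl ⟨hcD, hcd0⟩).trans hcd
          set F : L → L := fun d => proj (d - εa) with hFd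
          set z : X := d0 • x with hzd
          have hz0 : (0 : X) ≤ z := smul_nonneg'' (hDpos d0 hd0) hx
          set Dπ : Set L := F '' D' with hDπd
          have hsub : Dπ ⊆ {π : L | π * π = π} := by
            rintro _ ⟨d, _, rfl⟩
            exact proj_idem _
          have hFmono : ∀ a b : L, a ≤ b → F a ≤ F b :=
            fun a b h => proj_mono (sub_le_sub_right h εa)
          have hdirπ : DirectedOn (fun a b => b ≤ a) Dπ := by
            rintro _ ⟨a, ha, rfl⟩ _ ⟨b, hb, rfl⟩
            obtain ⟨c, hc, hca, hcb⟩ := hD'dir a ha b hb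
            exact ⟨F c, ⟨c, hc, rfl⟩, hFmono _ _ hca, hFmono _ _ hcb⟩
          have hπd : ∀ d ∈ D', εa * F d ≤ d := by
            intro d hd
            have hfle : (-(d - εa)) ⊔ 0 ≤ εa := by
              rw [neg_sub]
              exact sup_le (sub_le_self εa (hDpos d hd.1)) hεa0
            have h0 := proj_eps hε hfle
            calc εa * F d ≤ εa + ((d - εa) ⊓ 0) := h0
              _ = d ⊓ εa := by
                  rw [add_inf]
                  have h1 : εa + (d - εa) = d := by abel
                  rw [h1, add_zero]
              _ ≤ d := inf_le_left
          have hglbπ : IsGLB Dπ 0 := by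
            constructor
            · rintro _ ⟨d, _, rfl⟩
              exact proj_nonneg _
            · intro l hl
              have h1 : ∀ d ∈ D', εa * l ≤ d := fun d hd =>
                (mul_mono_left hεa0 (hl ⟨d, hd, rfl⟩)).trans (hπd d hd)
              have h2 : εa * l ≤ 0 := hD'glb.2 (fun d hd => h1 d hd)
              have h3 := mul_mono_left
                (DFAlgebra.algebraMap_nonneg (L := L) ε⁻¹ (by positivity)) h2
              rwa [mul_zero, ← mul_assoc, hεad, ← map_mul, inv_mul_cancel₀ hε.ne',
                map_one, one_mul] at h3
          have hPx := hP Dπ hsub hdirπ hglbπ z hz0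
          have hlb : y - εa • x ∈ lowerBounds ((fun l => l • z) '' Dπ) := by
            rintro _ ⟨_, ⟨d, hd, rfl⟩, rfl⟩
            have h1 : y ≤ d • x := hy ⟨d, hd.1, rfl⟩
            have hc : (d - εa) * (1 - F d) ≤ 0 := proj_mul_neg (d - εa)
            have hc2 : d * (1 - F d) ≤ εa * (1 - F d) := by
              rw [sub_mul] at hc
              exact sub_nonpos.1 hc
            have hc3 : εa * (1 - F d) ≤ εa := by
              have h0 := mul_mono_left hεa0 (sub_le_self (1 : L) (proj_nonneg (d - εa)))
              rwa [mul_one] at h0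
            have hc4 : d - d * F d ≤ εa := by
              calc d - d * F d = d * (1 - F d) := (mul_one_sub d (F d)).symm
                _ ≤ εa := hc2.trans hc3
            have hc5 : d ≤ εa + d * F d := sub_le_iff_le_add.1 hc4
            have hc6 : d * F d ≤ d0 * F d := by
              have h0 := mul_mono_left (proj_nonneg (d - εa)) hd.2
              calc d * F d = F d * d := mul_comm _ _
                _ ≤ F d * d0 := h0
                _ = d0 * F d := mul_comm _ _
            have hc7 : d ≤ εa + d0 * F d := hc5.trans (add_le_add_right hc6 εa)
            have hc8 := smul_mono_scalar hc7 hx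
            rw [add_smul] at hc8
            have hc9 : (d0 * F d) • x = F d • z := by rw [mul_comm, mul_smul]
            rw [hc9] at hc8
            exact sub_le_iff_le_add'.2 (h1.trans hc8)
          have h7 := hPx.2 hlb
          exact sub_nonpos.1 h7
        set DR : Set L := (fun r : ℝ => algebraMap ℝ L r) '' {r : ℝ | 0 < r} with hDRd
        have hRsub : DR ⊆ {l : L | ∃ r : ℝ, l = algebraMap ℝ L r} := by
          rintro _ ⟨r, _, rfl⟩
          exact ⟨r, rfl⟩
        have hRdir : DirectedOn (fun a b => b ≤ a) DR := by
          rintro _ ⟨r, hr, rfl⟩ _ ⟨s, hs, rfl⟩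
          exact ⟨algebraMap ℝ L (min r s), ⟨min r s, show 0 < min r s from lt_min (show 0 < r from hr) (show 0 < s from hs), rfl⟩,
            algMono (min_le_left r s), algMono (min_le_right r s)⟩
        have hRglb : IsGLB DR 0 := by
          constructor
          · rintro _ ⟨r, hr, rfl⟩
            exact DFAlgebra.algebraMap_nonneg r hr.le
          · intro l hl
            have h1 : ∀ n : ℕ, l ⊔ 0 ≤ algebraMap ℝ L (1 / ((n : ℝ) + 1)) := fun n =>
              sup_le (hl ⟨1 / ((n : ℝ) + 1), by simp only [Set.mem_setOf_eq]; positivity, rfl⟩)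
                (DFAlgebra.algebraMap_nonneg _ (by positivity))
            exact le_trans le_sup_left (arch' h1)
        have hfin := hR DR hRsub hRdir hRglb x hx
        apply hfin.2
        rintro _ ⟨_, ⟨r, hr, rfl⟩, rfl⟩
        exact key r hr
end
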